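/- Every relation R on a finite type V has a repair D such that every simple cycle of D has all of its vertices contained in some sink strongly connected component of R. -/

import Mathlib

/-- A relation is consistent (satisfies the key constraint on the first attribute)
if it is functional. -/
def Consistent {V : Type*} (R : V → V → Prop) : Prop :=
  ∀ a b b', R a b → R a b' → b = b'

/-- `D` is a (subset) repair of `R`: a maximal consistent subrelation of `R`. -/
def Repair {V : Type*} (R D : V → V → Prop) : Prop :=
  (∀ a b, D a b → R a b) ∧ Consistent D ∧
  ∀ D' : V → V → Prop, Consistent D' → (∀ a b, D a b → D' a b) →
    (∀ a b, D' a b → R a b) → D' = D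

/-- A simple cycle of length `k` in `D`: an injective closed walk `ZMod k → V`. -/
def IsSimpleCycle {V : Type*} (D : V → V → Prop) (k : ℕ) (g : ZMod k → V) : Prop :=
  Function.Injective g ∧ ∀ i, D (g i) (g (i + 1))

/-- A sink strongly connected component of `R`. -/
def SinkSCC {V : Type*} (R : V → V → Prop) (S : Set V) : Prop :=
  S.Nonempty ∧ (∀ a ∈ S, ∀ b ∈ S, Relation.ReflTransGen R a b) ∧
  (∀ a ∈ S, ∃ b, R a b) ∧ (∀ a ∈ S, ∀ b, R a b → b ∈ S)

set_option linter.unusedSectionVars false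

open Relation

section Aux

variable {V : Type*} [Fintype V]

/-- number of vertices reachable from `a`. -/
noncomputable def mCard (R : V → V → Prop) (a : V) : ℕ :=
  Set.ncard {c | ReflTransGen R a c}

/-- paths of length `n`. -/
def PathN (R : V → V → Prop) : ℕ → V → V → Prop
  | 0, a, c => a = c
  | n+1, a, c => ∃ b, R a b ∧ PathN R n b c

/-- every vertex reachable from `a` reaches back. -/
def SafeV (R : V → V → Prop) (a : V) : Prop :=
  ∀ c, ReflTransGen R a c → ReflTransGen R c a

lemma pathN_rtg {R : V → V → Prop} : ∀ {n a c}, PathN R n a c → ReflTransGen R a c := by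
  intro n
  induction n with
  | zero => intro a c h; exact h ▸ ReflTransGen.refl
  | succ n ih =>
    rintro a c ⟨b, hab, hbc⟩
    exact ReflTransGen.head hab (ih hbc)

lemma rtg_pathN {R : V → V → Prop} {a c : V} (h : ReflTransGen R a c) :
    ∃ n, PathN R n a c := by
  induction h using ReflTransGen.head_induction_on with
  | refl => exact ⟨0, rfl⟩
  | head hab _ ih =>
    obtain ⟨n, hn⟩ := ih
    exact ⟨n + 1, _, hab, hn⟩

lemma reach_subset {R : V → V → Prop} {a b : V} (h : ReflTransGen R a b) :
    {c | ReflTransGen R b c} ⊆ {c | ReflTransGen R a c} :=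
  fun _ hc => h.trans hc

lemma mCard_le {R : V → V → Prop} {a b : V} (h : ReflTransGen R a b) :
    mCard R b ≤ mCard R a :=
  Set.ncard_le_ncard (reach_subset h) (Set.toFinite _)

lemma mCard_lt {R : V → V → Prop} {a c : V} (h : ReflTransGen R a c)
    (h2 : ¬ ReflTransGen R c a) : mCard R c < mCard R a := by
  refine Set.ncard_lt_ncard ⟨reach_subset h, ?_⟩ (Set.toFinite _)
  intro hsub
  exact h2 (hsub (ReflTransGen.refl : ReflTransGen R a a))

lemma unsafe_witness {R : V → V → Prop} {a : V} (h : ¬ SafeV R a) :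
    ∃ n, ∃ c, PathN R n a c ∧ mCard R c < mCard R a := by
  simp only [SafeV, not_forall] at h
  obtain ⟨c, hac, hca⟩ := h
  obtain ⟨n, hn⟩ := rtg_pathN hac
  exact ⟨n, c, hn, mCard_lt hac hca⟩

open Classical in
/-- distance to a vertex of smaller reach-count. -/
noncomputable def ddist (R : V → V → Prop) (a : V) : ℕ :=
  if h : ∃ n, ∃ c, PathN R n a c ∧ mCard R c < mCard R a then Nat.find h else 0

noncomputable def phiV (R : V → V → Prop) (a : V) : ℕ ×ₗ ℕ :=
  toLex (mCard R a, ddist R a)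

lemma safe_mCard_eq {R : V → V → Prop} {a c : V} (hs : SafeV R a)
    (h : ReflTransGen R a c) : mCard R c = mCard R a :=
  le_antisymm (mCard_le h) (mCard_le (hs c h))

lemma safe_ddist {R : V → V → Prop} {a : V} (hs : SafeV R a) : ddist R a = 0 := by
  rw [ddist, dif_neg]
  rintro ⟨n, c, hp, hm⟩
  exact absurd (safe_mCard_eq hs (pathN_rtg hp)) hm.ne

lemma safe_succ {R : V → V → Prop} {a b : V} (hs : SafeV R a) (h : R a b) :
    SafeV R b := fun c hbc =>
  (hs c ((ReflTransGen.single h).trans hbc)).trans (ReflTransGen.single h)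

lemma safe_phi_eq {R : V → V → Prop} {a b : V} (hs : SafeV R a) (h : R a b) :
    phiV R b = phiV R a := by
  unfold phiV
  rw [safe_mCard_eq hs (ReflTransGen.single h), safe_ddist hs,
    safe_ddist (safe_succ hs h)]

lemma exists_decr {R : V → V → Prop} {a : V} (h : ¬ SafeV R a) :
    ∃ b, R a b ∧ phiV R b < phiV R a := by
  classical
  have H := unsafe_witness h
  obtain ⟨c, hc, hm⟩ := Nat.find_spec H
  have hd0 : Nat.find H ≠ 0 := by
    intro h0
    rw [h0] at hc
    exact absurd (hc ▸ hm) (lt_irrefl _)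
  obtain ⟨d, hd⟩ : ∃ d, Nat.find H = d + 1 := ⟨Nat.find H - 1, by omega⟩
  rw [hd] at hc
  obtain ⟨b, hab, hbc⟩ := hc
  refine ⟨b, hab, ?_⟩
  have hle : mCard R b ≤ mCard R a := mCard_le (ReflTransGen.single hab)
  rcases lt_or_eq_of_le hle with hlt | heq
  · exact Prod.Lex.lt_iff.2 (Or.inl hlt)
  · have Hb : ∃ n, ∃ c', PathN R n b c' ∧ mCard R c' < mCard R b :=
      ⟨d, c, hbc, heq ▸ hm⟩
    have hddb : ddist R b ≤ d := by
      rw [ddist, dif_pos Hb]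
      exact Nat.find_le ⟨c, hbc, heq ▸ hm⟩
    have hdda : ddist R a = d + 1 := by rw [ddist, dif_pos H, hd]
    exact Prod.Lex.lt_iff.2 (Or.inr ⟨heq, by show ddist R b < ddist R a; omega⟩)

open Classical in
noncomputable def fRep (R : V → V → Prop) (a : V) : V :=
  if h : ¬ SafeV R a then (exists_decr h).choose
  else if h2 : ∃ b, R a b then h2.choose else a

lemma fRep_edge {R : V → V → Prop} {a : V} (h : ∃ b, R a b) : R a (fRep R a) := by
  classical
  rw [fRep]
  by_cases h1 : ¬ SafeV R a
  · rw [dif_pos h1]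
    exact (exists_decr h1).choose_spec.1
  · rw [dif_neg h1, dif_pos h]
    exact h.choose_spec

lemma fRep_phi_lt {R : V → V → Prop} {a : V} (h : ¬ SafeV R a) :
    phiV R (fRep R a) < phiV R a := by
  classical
  rw [fRep, dif_pos h]
  exact (exists_decr h).choose_spec.2

lemma fRep_phi_le {R : V → V → Prop} {a : V} (h : ∃ b, R a b) :
    phiV R (fRep R a) ≤ phiV R a := by
  by_cases hs : SafeV R a
  · exact (safe_phi_eq hs (fRep_edge h)).le
  · exact (fRep_phi_lt hs).le

end Aux

theorem stmt4 {V : Type*} [Fintype V] (R : V → V → Prop) :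
    ∃ D : V → V → Prop, Repair R D ∧
      ∀ k : ℕ, 1 ≤ k → ∀ g : ZMod k → V, IsSimpleCycle D k g →
        ∃ S : Set V, SinkSCC R S ∧ ∀ i, g i ∈ S := by
  classical
  refine ⟨fun a b => R a b ∧ b = fRep R a, ⟨fun a b h => h.1,
    fun a b b' h h' => h.2.trans h'.2.symm, ?_⟩, ?_⟩
  · intro D' hcons hsub hsubR
    funext a b
    apply propext
    constructor
    · intro h
      have hex : ∃ c, R a c := ⟨b, hsubR a b h⟩
      have hDf : R a (fRep R a) ∧ fRep R a = fRep R a := ⟨fRep_edge hex, rfl⟩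
      exact ⟨hsubR a b h, hcons a b (fRep R a) h (hsub _ _ hDf)⟩
    · exact hsub a b
  · intro k hk g hg
    haveI : NeZero k := ⟨by omega⟩
    obtain ⟨hinj, hcyc⟩ := hg
    have hedge : ∀ i, R (g i) (g (i+1)) := fun i => (hcyc i).1
    have hf : ∀ i, g (i+1) = fRep R (g i) := fun i => (hcyc i).2
    have hout : ∀ i : ZMod k, ∃ b, R (g i) b := fun i => ⟨g (i+1), hedge i⟩
    have hstep : ∀ i, phiV R (g (i+1)) ≤ phiV R (g i) := by
      intro i; rw [hf i]; exact fRep_phi_le (hout i)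
    have hsafe : ∀ i, SafeV R (g i) := by
      intro i
      by_contra hi
      have hlt : phiV R (g (i+1)) < phiV R (g i) := by
        rw [hf i]; exact fRep_phi_lt hi
      have hchain : ∀ n : ℕ, phiV R (g (i + 1 + n)) ≤ phiV R (g (i+1)) := by
        intro n
        induction n with
        | zero => simp
        | succ n ih =>
          have hc : (((n+1 : ℕ)) : ZMod k) = (n : ZMod k) + 1 := by push_cast; ring
          rw [hc, ← add_assoc]
          exact (hstep _).trans ih
      have hidx : i + 1 + ((k-1 : ℕ) : ZMod k) = i := by
        have h2 : ((1:ℕ) : ZMod k) + ((k-1:ℕ) : ZMod k) = ((1 + (k-1) : ℕ) : ZMod k) :=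
          (Nat.cast_add _ _).symm
        have h3 : 1 + (k-1) = k := by omega
        rw [Nat.cast_one] at h2
        rw [add_assoc, h2, h3, ZMod.natCast_self, add_zero]
      have hle := hchain (k-1)
      rw [hidx] at hle
      exact absurd (hle.trans_lt hlt) (lt_irrefl _)
    refine ⟨{c | ReflTransGen R (g 0) c}, ⟨⟨g 0, ReflTransGen.refl⟩, ?_, ?_, ?_⟩, ?_⟩
    · intro a ha b hb
      exact (hsafe 0 a ha).trans hb
    · intro a ha
      rcases (hsafe 0 a ha).cases_head with rfl | ⟨b, hab, _⟩
      · exact ⟨g (0+1), hedge 0⟩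
      · exact ⟨b, hab⟩
    · intro a ha b hab
      exact ha.tail hab
    · have hreach : ∀ n : ℕ, ReflTransGen R (g 0) (g (n : ZMod k)) := by
        intro n
        induction n with
        | zero => rw [Nat.cast_zero]
        | succ n ih =>
          have hc : (((n+1 : ℕ)) : ZMod k) = (n : ZMod k) + 1 := by push_cast; ring
          rw [hc]
          exact ih.tail (hedge _)
      intro i
      have := hreach i.val
      rwa [ZMod.natCast_rightInverse i] at this
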